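/- Let k, n, t be positive integers with t ≤ n, and for i in [k] let W_i = {jk + i : 0 ≤ j ≤ n-1}. For each i in [n], let F_i ⊆ W_1 × ··· × W_k satisfy |F_i| > (t-1)n^{k-1}. Then there exist t pairwise distinct indices i_1, ..., i_t in [n] such that {F_{i_1}, ..., F_{i_t}} admits a rainbow matching. -/

import Mathlib

namespace RainbowAux

variable {k n : ℕ}

/-- The "row index" of an edge at coordinate `j`. -/
def Xc (k : ℕ) (f : Fin k → ℕ) (j : Fin k) : ℕ := (f j - (j.val + 1)) / k

/-- An edge of the complete `k`-partite `k`-graph. -/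
def Valid (k n : ℕ) (f : Fin k → ℕ) : Prop :=
  ∀ j : Fin k, ∃ x < n, f j = x * k + (j.val + 1)

lemma Xc_spec (hk : 0 < k) {f : Fin k → ℕ} (hf : Valid k n f) (j : Fin k) :
    f j = Xc k f j * k + (j.val + 1) ∧ Xc k f j < n := by
  obtain ⟨x, hx, hfj⟩ := hf j
  have hx' : Xc k f j = x := by
    unfold Xc
    rw [hfj, Nat.add_sub_cancel, Nat.mul_div_cancel _ hk]
  rw [hx']
  exact ⟨hfj, hx⟩

/-- The parallel class of an edge. -/
def cls (n : ℕ) (hk : 0 < k) (f : Fin k → ℕ) : Fin k → ZMod n :=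
  fun j => (Xc k f j : ZMod n) - (Xc k f ⟨0, hk⟩ : ZMod n)

lemma recover (hk : 0 < k) (hn : 0 < n) {f f' : Fin k → ℕ}
    (hf : Valid k n f) (hf' : Valid k n f')
    (hc : cls n hk f = cls n hk f')
    (h0 : Xc k f ⟨0, hk⟩ = Xc k f' ⟨0, hk⟩) : f = f' := by
  haveI : NeZero n := ⟨hn.ne'⟩
  funext j
  have h1 := congrFun hc j
  unfold cls at h1
  rw [h0] at h1
  have h2 : (Xc k f j : ZMod n) = (Xc k f' j : ZMod n) := by
    have := sub_left_injective (G := ZMod n) h1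
    exact this
  have h3 : Xc k f j = Xc k f' j := by
    have hv := congrArg ZMod.val h2
    rwa [ZMod.val_cast_of_lt (Xc_spec hk hf j).2,
      ZMod.val_cast_of_lt (Xc_spec hk hf' j).2] at hv
  rw [(Xc_spec hk hf j).1, (Xc_spec hk hf' j).1, h3]

lemma disjoint_of_cls_eq (hk : 0 < k) (hn : 0 < n) {f f' : Fin k → ℕ}
    (hf : Valid k n f) (hf' : Valid k n f')
    (hc : cls n hk f = cls n hk f') (hne : f ≠ f') :
    ∀ p q, f p ≠ f' q := by
  haveI : NeZero n := ⟨hn.ne'⟩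
  intro p q hpq
  have hp := (Xc_spec hk hf p).1
  have hq := (Xc_spec hk hf' q).1
  -- residues mod k agree
  have hmod : (p.val + 1) % k = (q.val + 1) % k := by
    have : f p % k = f' q % k := by rw [hpq]
    rwa [hp, hq, Nat.mul_comm, Nat.mul_comm (Xc k f' q), Nat.mul_add_mod,
      Nat.mul_add_mod] at this
  have hpq' : p = q := by
    have hpk : p.val + 1 ≤ k := p.isLt
    have hqk : q.val + 1 ≤ k := q.isLt
    rcases lt_or_eq_of_le hpk with h | h
    · rcases lt_or_eq_of_le hqk with h' | h'
      · rw [Nat.mod_eq_of_lt h, Nat.mod_eq_of_lt h'] at hmod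
        exact Fin.ext (by omega)
      · rw [Nat.mod_eq_of_lt h, h', Nat.mod_self] at hmod; omega
    · rcases lt_or_eq_of_le hqk with h' | h'
      · rw [h, Nat.mod_self, Nat.mod_eq_of_lt h'] at hmod; omega
      · exact Fin.ext (by omega)
  subst hpq'
  -- so Xc agree at p
  have hX : Xc k f p = Xc k f' p := by
    rw [hpq] at hp
    rw [hq] at hp
    have := Nat.add_right_cancel hp
    exact (Nat.eq_of_mul_eq_mul_right hk this).symm
  have h1 := congrFun hc p
  unfold cls at h1
  rw [hX] at h1
  have h0 : (Xc k f ⟨0, hk⟩ : ZMod n) = (Xc k f' ⟨0, hk⟩ : ZMod n) := by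
    have := sub_right_injective (G := ZMod n) h1
    exact this
  have h0' : Xc k f ⟨0, hk⟩ = Xc k f' ⟨0, hk⟩ := by
    have hv := congrArg ZMod.val h0
    rwa [ZMod.val_cast_of_lt (Xc_spec hk hf ⟨0, hk⟩).2,
      ZMod.val_cast_of_lt (Xc_spec hk hf' ⟨0, hk⟩).2] at hv
  exact hne (recover hk hn hf hf' hc h0')

/-- The finset of parallel classes. -/
def T (k n : ℕ) (hk : 0 < k) [NeZero n] : Finset (Fin k → ZMod n) :=
  Fintype.piFinset (fun j => if j = (⟨0, hk⟩ : Fin k) then ({0} : Finset (ZMod n)) else Finset.univ)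

lemma card_T (hk : 0 < k) (hn : 0 < n) :
    haveI : NeZero n := ⟨hn.ne'⟩
    (T k n hk).card = n ^ (k - 1) := by
  haveI : NeZero n := ⟨hn.ne'⟩
  rw [T, Fintype.card_piFinset]
  have h1 : ∀ j : Fin k,
      (if j = (⟨0, hk⟩ : Fin k) then ({0} : Finset (ZMod n)) else Finset.univ).card
        = if j = (⟨0, hk⟩ : Fin k) then 1 else n := by
    intro j; split
    · simp
    · simp [Finset.card_univ, ZMod.card]
  rw [Finset.prod_congr rfl (fun j _ => h1 j)]
  rw [← Finset.mul_prod_erase Finset.univ _ (Finset.mem_univ (⟨0, hk⟩ : Fin k))]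
  rw [if_pos rfl, one_mul]
  have h2 : ∀ j ∈ Finset.univ.erase (⟨0, hk⟩ : Fin k),
      (if j = (⟨0, hk⟩ : Fin k) then 1 else n) = n := by
    intro j hj
    rw [if_neg (Finset.mem_erase.1 hj).1]
  rw [Finset.prod_congr rfl h2, Finset.prod_const,
    Finset.card_erase_of_mem (Finset.mem_univ _), Finset.card_univ, Fintype.card_fin]

lemma cls_mem_T (hk : 0 < k) (hn : 0 < n) (f : Fin k → ℕ) :
    haveI : NeZero n := ⟨hn.ne'⟩
    cls n hk f ∈ T k n hk := by
  haveI : NeZero n := ⟨hn.ne'⟩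
  rw [T, Fintype.mem_piFinset]
  intro j
  by_cases h : j = (⟨0, hk⟩ : Fin k)
  · subst h; simp [cls]
  · rw [if_neg h]; exact Finset.mem_univ _

end RainbowAux

open RainbowAux in
theorem rainbow_matching_some_t_families
    (k n t : ℕ) (hk : 0 < k) (hn : 0 < n) (ht : 0 < t) (htn : t ≤ n)
    (W : Fin k → Finset ℕ)
    (hW : ∀ i : Fin k, W i = (Finset.range n).image (fun j => j * k + (i.val + 1)))
    (F : Fin n → Finset (Fin k → ℕ))
    (hFmem : ∀ i, ∀ f ∈ F i, ∀ j, f j ∈ W j)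
    (hFcard : ∀ i, (F i).card > (t - 1) * n ^ (k - 1)) :
    ∃ g : Fin t → Fin n, Function.Injective g ∧
      ∃ e : Fin t → (Fin k → ℕ), (∀ i, e i ∈ F (g i)) ∧
        ∀ i j, i ≠ j → ∀ p q, e i p ≠ e j q := by
  classical
  haveI : NeZero n := ⟨hn.ne'⟩
  have hvalid : ∀ i, ∀ f ∈ F i, Valid k n f := by
    intro i f hf j
    have h1 := hFmem i f hf j
    rw [hW j] at h1
    simp only [Finset.mem_image, Finset.mem_range] at h1
    obtain ⟨x, hx, hfx⟩ := h1
    exact ⟨x, hx, hfx.symm⟩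
  -- fiberwise decomposition by parallel class
  have hfib : ∀ i, (F i).card
      = ∑ c ∈ T k n hk, ((F i).filter (fun f => cls n hk f = c)).card :=
    fun i => Finset.card_eq_sum_card_fiberwise (fun f _ => cls_mem_T hk hn f)
  -- pigeonhole: some class is popular
  have hexists : ∃ c ∈ T k n hk,
      (t - 1) * n + 1 ≤ ∑ i : Fin n, ((F i).filter (fun f => cls n hk f = c)).card := by
    by_contra hcon
    push_neg at hcon
    have hsum1 : (t - 1) * n ^ (k - 1) * n + n ≤ ∑ i : Fin n, (F i).card := by
      calc (t - 1) * n ^ (k - 1) * n + n = ∑ _i : Fin n, ((t - 1) * n ^ (k - 1) + 1) := by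
            rw [Finset.sum_const, Finset.card_univ, Fintype.card_fin, smul_eq_mul]; ring
        _ ≤ ∑ i : Fin n, (F i).card := Finset.sum_le_sum (fun i _ => hFcard i)
    have hsum2 : ∑ i : Fin n, (F i).card
        = ∑ c ∈ T k n hk, ∑ i : Fin n, ((F i).filter (fun f => cls n hk f = c)).card := by
      rw [← Finset.sum_comm]
      exact Finset.sum_congr rfl (fun i _ => hfib i)
    have hsum3 : ∑ c ∈ T k n hk, ∑ i : Fin n, ((F i).filter (fun f => cls n hk f = c)).card
        ≤ (T k n hk).card * ((t - 1) * n) := by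
      have := Finset.sum_le_card_nsmul (T k n hk)
        (fun c => ∑ i : Fin n, ((F i).filter (fun f => cls n hk f = c)).card)
        ((t - 1) * n) (fun c hcT => by
          have h9 := hcon c hcT
          show (∑ i : Fin n, ((F i).filter (fun f => cls n hk f = c)).card) ≤ (t - 1) * n
          omega)
      simpa using this
    rw [card_T hk hn] at hsum3
    have heq : (t - 1) * n ^ (k - 1) * n = n ^ (k - 1) * ((t - 1) * n) := by ring
    omega
  obtain ⟨c, hcT, hc⟩ := hexists
  set S : Fin n → Finset (Fin k → ℕ) := fun i => (F i).filter (fun f => cls n hk f = c)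
    with hS
  have hSF : ∀ i, ∀ f ∈ S i, f ∈ F i := fun i f hf => (Finset.mem_filter.1 hf).1
  have hScls : ∀ i, ∀ f ∈ S i, cls n hk f = c := fun i f hf => (Finset.mem_filter.1 hf).2
  have hSn : ∀ i, (S i).card ≤ n := by
    intro i
    have := Finset.card_range n ▸ Finset.card_le_card_of_injOn
      (fun f => Xc k f ⟨0, hk⟩)
      (fun f hf => Finset.mem_range.2 (Xc_spec hk (hvalid i f (hSF i f hf)) ⟨0, hk⟩).2)
      (fun f hf f' hf' h0 => recover hk hn (hvalid i f (hSF i f hf))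
        (hvalid i f' (hSF i f' hf')) (by rw [hScls i f hf, hScls i f' hf']) h0)
    simpa using this
  -- Hall's theorem with dummies
  set inlE : (Fin k → ℕ) ↪ ((Fin k → ℕ) ⊕ ℕ) := ⟨Sum.inl, Sum.inl_injective⟩ with hinlE
  set inrE : ℕ ↪ ((Fin k → ℕ) ⊕ ℕ) := ⟨Sum.inr, Sum.inr_injective⟩ with hinrE
  set S' : Fin n → Finset ((Fin k → ℕ) ⊕ ℕ) :=
    fun i => (S i).map inlE ∪ (Finset.range (n - t)).map inrE with hS'
  have hall : ∀ A : Finset (Fin n), A.card ≤ (A.biUnion S').card := by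
    intro A
    rcases A.eq_empty_or_nonempty with hA | ⟨i0, hi0⟩
    · simp [hA]
    have hsub : (A.biUnion S).map inlE ∪ (Finset.range (n - t)).map inrE ⊆ A.biUnion S' := by
      apply Finset.union_subset
      · intro x hx
        obtain ⟨y, hy, rfl⟩ := Finset.mem_map.1 hx
        obtain ⟨i, hiA, hyS⟩ := Finset.mem_biUnion.1 hy
        exact Finset.mem_biUnion.2 ⟨i, hiA, Finset.mem_union_left _ (Finset.mem_map_of_mem _ hyS)⟩
      · intro x hx
        exact Finset.mem_biUnion.2 ⟨i0, hi0, Finset.mem_union_right _ hx⟩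
    have hdisj : Disjoint ((A.biUnion S).map inlE) ((Finset.range (n - t)).map inrE) := by
      rw [Finset.disjoint_left]
      rintro x hx hx'
      obtain ⟨y, _, rfl⟩ := Finset.mem_map.1 hx
      obtain ⟨z, _, hz⟩ := Finset.mem_map.1 hx'
      simp [hinlE, hinrE] at hz
    have hcard2 : (A.biUnion S).card + (n - t) ≤ (A.biUnion S').card := by
      have h1 : ((A.biUnion S).map inlE ∪ (Finset.range (n - t)).map inrE).card
          = (A.biUnion S).card + (n - t) := by
        rw [Finset.card_union_of_disjoint hdisj, Finset.card_map, Finset.card_map,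
          Finset.card_range]
      rw [← h1]
      exact Finset.card_le_card hsub
    refine le_trans ?_ hcard2
    by_contra hcon
    push_neg at hcon
    have ha : A.card ≤ n := by
      have := Finset.card_le_card (Finset.subset_univ A)
      simpa using this
    obtain ⟨w, b, hb, huw, hwb⟩ :
        ∃ w b, b = n - A.card ∧ (A.biUnion S).card ≤ w ∧ w + b = t - 1 := by
      exact ⟨t - 1 - (n - A.card), n - A.card, rfl, by omega, by omega⟩
    have hAsum : ∑ i ∈ A, (S i).card ≤ A.card * w := by
      have := Finset.sum_le_card_nsmul A (fun i => (S i).card) w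
        (fun i hi => le_trans (Finset.card_le_card (Finset.subset_biUnion_of_mem S hi)) huw)
      simpa using this
    have hBsum : ∑ i ∈ Finset.univ \ A, (S i).card ≤ b * n := by
      have h2 := Finset.sum_le_card_nsmul (Finset.univ \ A) (fun i => (S i).card) n
        (fun i _ => hSn i)
      have h3 : (Finset.univ \ A).card = b := by
        rw [Finset.card_sdiff_of_subset (Finset.subset_univ A), hb]
        simp
      rw [h3] at h2
      simpa using h2
    have hsplit : ∑ i ∈ Finset.univ \ A, (S i).card + ∑ i ∈ A, (S i).card
        = ∑ i : Fin n, (S i).card := Finset.sum_sdiff (Finset.subset_univ A)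
    have hle1 : (t - 1) * n + 1 ≤ b * n + A.card * w := by
      have := hc
      rw [← hsplit] at this
      omega
    have hle2 : A.card * w ≤ n * w := Nat.mul_le_mul_right w ha
    have hle3 : b * n + n * w = n * (t - 1) := by rw [← hwb]; ring
    have : (t - 1) * n + 1 ≤ n * (t - 1) := by omega
    rw [mul_comm] at this
    omega
  obtain ⟨f, hfinj, hfmem'⟩ := (Finset.all_card_le_biUnion_card_iff_exists_injective S').1 hall
  set L : Finset (Fin n) := Finset.univ.filter (fun i : Fin n => (f i).isLeft) with hLdef
  have hR : (Finset.univ.filter (fun i : Fin n => ¬ (f i).isLeft = true)).card ≤ n - t := by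
    have hmapsto : ∀ i ∈ Finset.univ.filter (fun i : Fin n => ¬ (f i).isLeft = true),
        Sum.elim (fun _ => 0) id (f i) ∈ Finset.range (n - t) := by
      intro i hi
      have hnl : ¬ (f i).isLeft = true := (Finset.mem_filter.1 hi).2
      have hm := hfmem' i
      rw [hS'] at hm
      rcases Finset.mem_union.1 hm with h | h
      · obtain ⟨y, _, hy⟩ := Finset.mem_map.1 h
        exfalso; apply hnl; rw [← hy]; rfl
      · obtain ⟨z, hz, hzy⟩ := Finset.mem_map.1 h
        rw [← hzy]; simpa [hinrE] using hz
    have hinj : Set.InjOn (fun i => Sum.elim (fun _ => (0:ℕ)) id (f i))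
        (Finset.univ.filter (fun i : Fin n => ¬ (f i).isLeft = true)) := by
      intro i hi i' hi' hval
      have hnl : ¬ (f i).isLeft = true := (Finset.mem_filter.1 hi).2
      have hnl' : ¬ (f i').isLeft = true := (Finset.mem_filter.1 hi').2
      obtain ⟨m, hm⟩ := Sum.isRight_iff.1 (by simpa [Sum.not_isLeft] using hnl)
      obtain ⟨m', hm'⟩ := Sum.isRight_iff.1 (by simpa [Sum.not_isLeft] using hnl')
      have hval' : Sum.elim (fun _ => (0:ℕ)) id (f i) = Sum.elim (fun _ => (0:ℕ)) id (f i') :=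
        hval
      rw [hm, hm'] at hval'
      simp only [Sum.elim_inr, id] at hval'
      apply hfinj
      rw [hm, hm', hval']
    have := Finset.card_le_card_of_injOn _ hmapsto hinj
    simpa using this
  have hLcard : t ≤ L.card := by
    have htot := Finset.card_filter_add_card_filter_not
      (s := (Finset.univ : Finset (Fin n))) (p := fun i : Fin n => (f i).isLeft = true)
    simp only [Finset.card_univ, Fintype.card_fin] at htot
    rw [hLdef]
    omega
  obtain ⟨L', hL'sub, hL'card⟩ := Finset.exists_subset_card_eq hLcard
  have e' := L'.equivFin
  set g : Fin t → Fin n := fun s => (e'.symm (Fin.cast hL'card.symm s) : {x // x ∈ L'}).val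
    with hg
  have hginj : Function.Injective g := by
    intro s1 s2 hs
    have h2 := e'.symm.injective (Subtype.ext hs)
    have h3 : (Fin.cast hL'card.symm s1).val = (Fin.cast hL'card.symm s2).val :=
      congrArg Fin.val h2
    exact Fin.ext h3
  have hgL : ∀ s, (f (g s)).isLeft := by
    intro s
    have : g s ∈ L := hL'sub (e'.symm (Fin.cast hL'card.symm s)).2
    simpa [hLdef] using this
  set e : Fin t → (Fin k → ℕ) := fun s => Sum.elim id (fun _ => fun _ => 0) (f (g s)) with he
  have hkey : ∀ s, f (g s) = Sum.inl (e s) ∧ e s ∈ S (g s) := by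
    intro s
    obtain ⟨x, hx⟩ := Sum.isLeft_iff.1 (hgL s)
    have hm := hfmem' (g s)
    rw [hS'] at hm
    rcases Finset.mem_union.1 hm with h | h
    · obtain ⟨y, hy, hyx⟩ := Finset.mem_map.1 h
      have hyx' : Sum.inl y = f (g s) := hyx
      constructor
      · rw [he]; simp only; rw [← hyx']; rfl
      · have : e s = y := by rw [he]; simp only; rw [← hyx']; rfl
        rw [this]; exact hy
    · obtain ⟨z, _, hz⟩ := Finset.mem_map.1 h
      exfalso
      have hl := hgL s
      rw [← hz] at hl
      simp [hinrE] at hl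
  refine ⟨g, hginj, e, fun s => hSF _ _ (hkey s).2, ?_⟩
  intro i j hij p q
  have hnei : e i ≠ e j := by
    intro heq
    apply hij
    apply hginj
    apply hfinj
    rw [(hkey i).1, (hkey j).1, heq]
  exact disjoint_of_cls_eq hk hn
    (hvalid _ _ (hSF _ _ (hkey i).2)) (hvalid _ _ (hSF _ _ (hkey j).2))
    (by rw [hScls _ _ (hkey i).2, hScls _ _ (hkey j).2]) hnei p q
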